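/- Let C be a finite set of candidates, N = {1,…,n} a set of voters with approval sets v_i ⊆ C, and k ≥ 1. Consider the matrix A with rows indexed by N ⊎ {⋆} and columns indexed by (N × {1,…,k}) ⊎ C, defined by: A[i, (j,ℓ)] = -1 if j = i and 0 otherwise; A[i, c] = 1 if c ∈ v_i and 0 otherwise; A[⋆, (j,ℓ)] = 0; and A[⋆, c] = 1 for all c ∈ C. If there exists a linear order ◁ on C such that every approval set v_i is an interval of ◁ (i.e., the profile has the candidate-interval/single-peaked property), then A is totally unimodular. -/

import Mathlib

/-- A rational matrix is totally unimodular if every square submatrix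
(given by a choice of distinct rows and distinct columns) has determinant
in `{-1, 0, 1}`. -/
def IsTU {R C : Type*} (A : Matrix R C ℚ) : Prop :=
  ∀ (k : ℕ) (f : Fin k → R) (g : Fin k → C),
    Function.Injective f → Function.Injective g →
      (A.submatrix f g).det ∈ ({-1, 0, 1} : Set ℚ)


open Matrix



lemma memS_mul {x y : ℚ} (hx : x ∈ ({-1, 0, 1} : Set ℚ)) (hy : y ∈ ({-1, 0, 1} : Set ℚ)) :
    x * y ∈ ({-1, 0, 1} : Set ℚ) := by
  rcases hx with rfl | rfl | rfl <;> rcases hy with rfl | rfl | rfl <;> norm_num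

lemma memS_negpow (n : ℕ) : ((-1 : ℚ) ^ n) ∈ ({-1, 0, 1} : Set ℚ) := by
  rcases Nat.even_or_odd n with h | h
  · right; right; simp [h.neg_one_pow]
  · left; simp [h.neg_one_pow]

lemma netTU : ∀ (s : ℕ) (N : Matrix (Fin s) (Fin s) ℚ),
    (∀ i j, N i j ∈ ({-1, 0, 1} : Set ℚ)) →
    (∀ j i₁ i₂, N i₁ j = 1 → N i₂ j = 1 → i₁ = i₂) →
    (∀ j i₁ i₂, N i₁ j = -1 → N i₂ j = -1 → i₁ = i₂) →
    N.det ∈ ({-1, 0, 1} : Set ℚ) := by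
  intro s
  induction s with
  | zero => intro N _ _ _; right; right; simp [Matrix.det_fin_zero]
  | succ t ih =>
    intro N hS h1 hm1
    by_cases hcol : ∃ j, ∀ i₁ i₂, N i₁ j ≠ 0 → N i₂ j ≠ 0 → i₁ = i₂
    · obtain ⟨j, hj⟩ := hcol
      by_cases hz : ∀ i, N i j = 0
      · rw [Matrix.det_eq_zero_of_column_eq_zero j hz]; right; left; rfl
      · push_neg at hz
        obtain ⟨i0, hi0⟩ := hz
        rw [Matrix.det_succ_column N j, Finset.sum_eq_single i0]
        · have hd := ih (N.submatrix i0.succAbove j.succAbove) (fun a b => hS _ _)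
            (fun c a b ha hb => Fin.succAbove_right_injective (h1 _ _ _ ha hb))
            (fun c a b ha hb => Fin.succAbove_right_injective (hm1 _ _ _ ha hb))
          exact memS_mul (memS_mul (memS_negpow _) (hS i0 j)) hd
        · intro i _ hne
          have h0 : N i j = 0 := by
            by_contra h
            exact hne (hj i i0 h hi0)
          simp [h0]
        · intro h; exact absurd (Finset.mem_univ i0) h
    · push_neg at hcol
      have hsum : ∀ j, ∑ i, N i j = 0 := by
        intro j
        obtain ⟨i₁, i₂, hn₁, hn₂, hne⟩ := hcol j
        -- one of them is 1, other is -1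
        have hv₁ : N i₁ j = 1 ∨ N i₁ j = -1 := by
          rcases hS i₁ j with h | h | h
          · right; exact h
          · exact absurd h hn₁
          · left; exact h
        have hv₂ : N i₂ j = 1 ∨ N i₂ j = -1 := by
          rcases hS i₂ j with h | h | h
          · right; exact h
          · exact absurd h hn₂
          · left; exact h
        obtain ⟨a, b, hab, ha, hb⟩ : ∃ a b, a ≠ b ∧ N a j = 1 ∧ N b j = -1 := by
          rcases hv₁ with h₁ | h₁ <;> rcases hv₂ with h₂ | h₂
          · exact absurd (h1 j _ _ h₁ h₂) hne
          · exact ⟨i₁, i₂, hne, h₁, h₂⟩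
          · exact ⟨i₂, i₁, hne.symm, h₂, h₁⟩
          · exact absurd (hm1 j _ _ h₁ h₂) hne
        have key : ∀ i, N i j = (if i = a then (1:ℚ) else 0) + (if i = b then (-1:ℚ) else 0) := by
          intro i
          rcases hS i j with h | h | h
          · have hib : i = b := hm1 j _ _ h hb
            simp [hib, hb, Ne.symm hab]
          · have hia : i ≠ a := by rintro rfl; rw [ha] at h; norm_num at h
            have hib : i ≠ b := by rintro rfl; rw [hb] at h; norm_num at h
            simp [h, hia, hib]
          · have hia : i = a := h1 j _ _ h ha
            simp [hia, ha, hab]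
        calc ∑ i, N i j
            = ∑ i, ((if i = a then (1:ℚ) else 0) + (if i = b then (-1:ℚ) else 0)) :=
              Finset.sum_congr rfl fun i _ => key i
          _ = 0 := by rw [Finset.sum_add_distrib, Finset.sum_ite_eq' Finset.univ a,
                Finset.sum_ite_eq' Finset.univ b]; simp
      have hdet : N.det = 0 := by
        rw [← Matrix.exists_vecMul_eq_zero_iff]
        refine ⟨fun _ => 1, ?_, ?_⟩
        · intro h
          have := congrFun h 0
          norm_num at this
        · funext j
          simpa [Matrix.vecMul, dotProduct] using hsum j
      rw [hdet]; right; left; rfl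

lemma intervalDet (s : ℕ) (M : Matrix (Fin s) (Fin s) ℚ)
    (h01 : ∀ i j, M i j = 0 ∨ M i j = 1)
    (hint : ∀ i (a b c : Fin s), a < b → b < c → M i a = 1 → M i c = 1 → M i b = 1) :
    M.det ∈ ({-1, 0, 1} : Set ℚ) := by
  cases s with
  | zero => right; right; simp
  | succ t =>
    set D : Matrix (Fin (t+1)) (Fin (t+1)) ℚ :=
      Matrix.of fun j c => (if j = c then (1:ℚ) else 0) - (if c.val = j.val + 1 then 1 else 0)
      with hD
    have hDtri : D.BlockTriangular id := by
      intro i j hij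
      have h3 : (j : ℕ) < (i : ℕ) := hij
      simp only [hD, of_apply]
      have h1 : ¬ (i = j) := by rw [Fin.ext_iff]; omega
      have h2 : ¬ ((j : ℕ) = (i : ℕ) + 1) := by omega
      rw [if_neg h1, if_neg h2]; ring
    have hDdet : D.det = 1 := by
      rw [Matrix.det_of_upperTriangular hDtri]
      apply Finset.prod_eq_one
      intro i _
      have h2 : ¬ ((i : ℕ) = (i : ℕ) + 1) := by omega
      simp [hD, h2]
    have hMD : ∀ i (c : Fin (t+1)), (M * D) i c
        = M i c - (if h : 0 < c.val then M i ⟨c.val - 1, by omega⟩ else 0) := by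
      intro i c
      rw [Matrix.mul_apply]
      simp only [hD, of_apply, mul_sub, mul_ite, mul_one, mul_zero]
      rw [Finset.sum_sub_distrib]
      congr 1
      · rw [Finset.sum_ite_eq' Finset.univ c (fun j => M i j)]
        simp
      · by_cases hc : 0 < c.val
        · have hlt : c.val - 1 < t + 1 := by omega
          have hiff : ∀ j : Fin (t+1), (c.val = j.val + 1) ↔ j = ⟨c.val - 1, hlt⟩ := by
            intro j
            rw [Fin.ext_iff]
            simp only [Fin.val_mk]
            omega
          simp only [hiff]
          rw [Finset.sum_ite_eq' Finset.univ (⟨c.val - 1, hlt⟩ : Fin (t+1)) (fun j => M i j)]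
          simp [hc]
        · have hno : ∀ j : Fin (t+1), ¬ (c.val = j.val + 1) := by intro j; omega
          simp [hno, hc]
    have hdet : M.det = ((M * D)ᵀ).det := by
      rw [Matrix.det_transpose, Matrix.det_mul, hDdet, mul_one]
    rw [hdet]
    apply netTU
    · intro i j
      rw [Matrix.transpose_apply, hMD]
      rcases h01 j i with h | h <;> rw [h] <;> split <;>
        first
          | (rename_i hi
             rcases h01 j ⟨i.val - 1, by omega⟩ with h' | h' <;> rw [h'] <;> norm_num)
          | norm_num
    · -- at most one +1 per row of M * D
      intro c i₁ i₂ e₁ e₂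
      rw [Matrix.transpose_apply, hMD] at e₁ e₂
      by_contra hne
      have char : ∀ i : Fin (t+1),
          M c i - (if h : 0 < i.val then M c ⟨i.val - 1, by omega⟩ else 0) = 1 →
          M c i = 1 ∧ (0 < i.val → M c ⟨i.val - 1, by omega⟩ = 0) := by
        intro i e
        by_cases hi : 0 < i.val
        · rw [dif_pos hi] at e
          rcases h01 c i with h | h <;> rcases h01 c ⟨i.val - 1, by omega⟩ with h' | h' <;>
              rw [h, h'] at e <;> norm_num at e
          exact ⟨h, fun _ => h'⟩
        · rw [dif_neg hi, sub_zero] at e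
          exact ⟨e, fun h => absurd h hi⟩
      obtain ⟨m₁, o₁⟩ := char i₁ e₁
      obtain ⟨m₂, o₂⟩ := char i₂ e₂
      have main : ∀ a b : Fin (t+1), a < b → M c a = 1 → M c b = 1 →
          (0 < b.val → M c ⟨b.val - 1, by omega⟩ = 0) → False := by
        intro a b hab ma mb ob
        have hb0 : 0 < b.val := lt_of_le_of_lt (Nat.zero_le _) hab
        have hz := ob hb0
        set p : Fin (t+1) := ⟨b.val - 1, by omega⟩ with hp
        have hpb : p < b := by rw [Fin.lt_def]; show b.val - 1 < b.val; omega
        rcases eq_or_lt_of_le (show a ≤ p by rw [Fin.le_def]; simp [hp]; have := Fin.lt_def.mp hab; omega) with he | hlt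
        · rw [← he] at hz; rw [ma] at hz; norm_num at hz
        · have := hint c a p b hlt hpb ma mb
          rw [this] at hz; norm_num at hz
      rcases lt_trichotomy i₁ i₂ with hlt | heq | hlt
      · exact main i₁ i₂ hlt m₁ m₂ o₂
      · exact hne heq
      · exact main i₂ i₁ hlt m₂ m₁ o₁
    · -- at most one -1 per row of M * D
      intro c i₁ i₂ e₁ e₂
      rw [Matrix.transpose_apply, hMD] at e₁ e₂
      by_contra hne
      have char : ∀ i : Fin (t+1),
          M c i - (if h : 0 < i.val then M c ⟨i.val - 1, by omega⟩ else 0) = -1 →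
          M c i = 0 ∧ ∃ h : 0 < i.val, M c ⟨i.val - 1, by omega⟩ = 1 := by
        intro i e
        by_cases hi : 0 < i.val
        · rw [dif_pos hi] at e
          rcases h01 c i with h | h <;> rcases h01 c ⟨i.val - 1, by omega⟩ with h' | h' <;>
              rw [h, h'] at e <;> norm_num at e
          exact ⟨h, hi, h'⟩
        · rw [dif_neg hi, sub_zero] at e
          rcases h01 c i with h | h <;> rw [h] at e <;> norm_num at e
      obtain ⟨m₁, hi₁, p₁⟩ := char i₁ e₁
      obtain ⟨m₂, hi₂, p₂⟩ := char i₂ e₂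
      have main : ∀ a b : Fin (t+1), a < b → M c a = 0 →
          (0 < a.val) → ∀ (ha : 0 < a.val) (hb : 0 < b.val),
          M c ⟨a.val - 1, by omega⟩ = 1 → M c ⟨b.val - 1, by omega⟩ = 1 → False := by
        intro a b hab ma _ ha hb pa pb
        have habv := Fin.lt_def.mp hab
        set qa : Fin (t+1) := ⟨a.val - 1, by omega⟩ with hqa
        set qb : Fin (t+1) := ⟨b.val - 1, by omega⟩ with hqb
        rcases eq_or_lt_of_le (show a ≤ qb by rw [Fin.le_def]; simp [hqb]; omega) with he | hlt
        · rw [← he] at pb; rw [ma] at pb; norm_num at pb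
        · have hqa_lt : qa < a := by rw [Fin.lt_def]; show a.val - 1 < a.val; omega
          have := hint c qa a qb hqa_lt hlt pa pb
          rw [this] at ma; norm_num at ma
      rcases lt_trichotomy i₁ i₂ with hlt | heq | hlt
      · exact main i₁ i₂ hlt m₁ hi₁ hi₁ hi₂ p₁ p₂
      · exact hne heq
      · exact main i₂ i₁ hlt m₂ hi₂ hi₂ hi₁ p₂ p₁

lemma memS_iff (x : ℚ) :
    x ∈ Set.range (SignType.cast : SignType → ℚ) ↔ x ∈ ({-1, 0, 1} : Set ℚ) := by
  constructor
  · rintro ⟨s, rfl⟩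
    cases s
    · right; left; rfl
    · left; rfl
    · right; right; rfl
  · rintro (rfl | rfl | rfl)
    exacts [⟨SignType.neg, rfl⟩, ⟨SignType.zero, rfl⟩, ⟨SignType.pos, rfl⟩]


/-- A 0/1 matrix whose rows are intervals w.r.t. the natural order of `Fin m` is TU. -/
lemma interval_TU {r : Type*} {m : ℕ} (Y : Matrix r (Fin m) ℚ)
    (h01 : ∀ i j, Y i j = 0 ∨ Y i j = 1)
    (hint : ∀ i (a b c : Fin m), a < b → b < c → Y i a = 1 → Y i c = 1 → Y i b = 1) :
    Y.IsTotallyUnimodular := by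
  intro K f g hf hg
  rw [memS_iff]
  set σ := Tuple.sort g with hσ
  have hmono : StrictMono (g ∘ σ) :=
    (Tuple.monotone_sort g).strictMono_of_injective (hg.comp σ.injective)
  have hdetσ : (Y.submatrix f (g ∘ σ)).det = (Equiv.Perm.sign σ : ℚ) * (Y.submatrix f g).det := by
    have : Y.submatrix f (g ∘ σ) = (Y.submatrix f g).submatrix id σ := rfl
    rw [this, Matrix.det_permute' σ (Y.submatrix f g)]
  have hsign : (Equiv.Perm.sign σ : ℚ) = 1 ∨ (Equiv.Perm.sign σ : ℚ) = -1 := by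
    rcases Int.units_eq_one_or (Equiv.Perm.sign σ) with h | h <;> rw [h] <;> simp
  have hmem : (Y.submatrix f (g ∘ σ)).det ∈ ({-1, 0, 1} : Set ℚ) := by
    apply intervalDet
    · intro i j; exact h01 _ _
    · intro i a b c hab hbc ha hc
      exact hint (f i) _ _ _ (hmono hab) (hmono hbc) ha hc
  have : (Y.submatrix f g).det = (Equiv.Perm.sign σ : ℚ) * (Y.submatrix f (g ∘ σ)).det := by
    rcases hsign with h | h <;> rw [h] at hdetσ ⊢ <;> rw [hdetσ] <;> ring
  rw [this]
  refine memS_mul ?_ hmem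
  rcases hsign with h | h <;> rw [h]
  · right; right; rfl
  · left; rfl

/-- The constraint matrix of (PAV-IP): rows are indexed by voters plus one
extra row `⋆`, columns by the variables `x_{j,ℓ}` (for `(j,ℓ) ∈ N × [k]`)
and `y_c` (for candidates `c`).  If the approval profile has the
candidate-interval (single-peaked) property — there is a linear order on the
candidates (encoded by a bijective position function `pos`) under which every
approval set `v i` is an interval — then this matrix is totally unimodular. -/
theorem stmt5 {n m k : ℕ} (hk : 1 ≤ k) (v : Fin n → Finset (Fin m))
    (hCI : ∃ pos : Equiv.Perm (Fin m), ∀ (i : Fin n) (a b c : Fin m),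
      pos a < pos b → pos b < pos c → a ∈ v i → c ∈ v i → b ∈ v i) :
    IsTU (Matrix.of fun (r : Fin n ⊕ Unit) (col : (Fin n × Fin k) ⊕ Fin m) =>
      match r, col with
      | Sum.inl i, Sum.inl jl => if jl.1 = i then (-1 : ℚ) else 0
      | Sum.inl i, Sum.inr c => if c ∈ v i then 1 else 0
      | Sum.inr _, Sum.inl _ => 0
      | Sum.inr _, Sum.inr _ => 1) := by
  classical
  obtain ⟨pos, hpos⟩ := hCI
  set X : Matrix (Fin n ⊕ Unit) (Fin n × Fin k) ℚ :=
    Matrix.of fun r jl => match r with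
      | Sum.inl i => if jl.1 = i then (-1:ℚ) else 0
      | Sum.inr _ => 0 with hX
  set Y : Matrix (Fin n ⊕ Unit) (Fin m) ℚ :=
    Matrix.of fun r c => match r with
      | Sum.inl i => if c ∈ v i then (1:ℚ) else 0
      | Sum.inr _ => 1 with hY
  have hA : (Matrix.of fun (r : Fin n ⊕ Unit) (col : (Fin n × Fin k) ⊕ Fin m) =>
      match r, col with
      | Sum.inl i, Sum.inl jl => if jl.1 = i then (-1 : ℚ) else 0
      | Sum.inl i, Sum.inr c => if c ∈ v i then 1 else 0
      | Sum.inr _, Sum.inl _ => 0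
      | Sum.inr _, Sum.inr _ => 1) = fromCols X Y := by
    ext r c
    cases r <;> cases c <;> rfl
  -- Y (reordered by pos) is an interval matrix, hence TU
  have hZ : (Y.submatrix id (pos.symm : Fin m → Fin m)).IsTotallyUnimodular := by
    apply interval_TU
    · rintro (i | u) c
      · simp only [hY, submatrix_apply, of_apply, id_eq]
        split <;> simp
      · right; rfl
    · rintro (i | u) a b c hab hbc ha hc
      · simp only [hY, submatrix_apply, of_apply, id_eq] at ha hc ⊢
        have hma : pos.symm a ∈ v i := by
          by_contra h; rw [if_neg h] at ha; norm_num at ha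
        have hmc : pos.symm c ∈ v i := by
          by_contra h; rw [if_neg h] at hc; norm_num at hc
        have hmb : pos.symm b ∈ v i := by
          apply hpos i (pos.symm a) (pos.symm b) (pos.symm c) <;>
            simp [Equiv.apply_symm_apply, hab, hbc, hma, hmc]
        rw [if_pos hmb]
      · rfl
  have hY_TU : Y.IsTotallyUnimodular := by
    have h2 := hZ.submatrix (id : (Fin n ⊕ Unit) → _) (pos : Fin m → Fin m)
    have heq : ((Y.submatrix id (pos.symm : Fin m → Fin m)).submatrix id (pos : Fin m → Fin m)) = Y := by
      ext i j
      simp [Matrix.submatrix_apply]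
    rwa [heq] at h2
  have hFR : (fromRows Yᵀ Xᵀ).IsTotallyUnimodular := by
    apply hY_TU.transpose.fromRows_unitlike
    intro _ jl
    refine ⟨Sum.inl jl.1, SignType.neg, ?_⟩
    funext x
    cases x with
    | inl i =>
      simp only [hX, transpose_apply, of_apply, Pi.single_apply]
      rcases eq_or_ne jl.1 i with h | h
      · subst h; simp
      · rw [if_neg h, if_neg (by simpa [eq_comm] using h)]
    | inr u =>
      simp [hX, Pi.single_apply]
  have hFC : (fromCols X Y).IsTotallyUnimodular := by
    rw [← transpose_isTotallyUnimodular_iff, transpose_fromCols]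
    have heq : (fromRows Xᵀ Yᵀ) =
        (fromRows Yᵀ Xᵀ).reindex (Equiv.sumComm _ _) (Equiv.refl _) := by
      ext i j
      cases i <;> rfl
    rw [heq, reindex_isTotallyUnimodular]
    exact hFR
  intro K f g hf hg
  rw [hA]
  have := hFC K f g hf hg
  rwa [memS_iff] at this
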